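/- Let R be a (not necessarily commutative) ring and let E, P, G, S, S' ∈ R satisfy E·P = 1 + S and P·E = 1 + S', and set Q := Σ_{n=0}^∞ (−1)^n · ((P·G)^n · P) · t^n ∈ R[[t]]. Then for every two-sided ideal I of R with S ∈ I and S' ∈ I, every coefficient of the power series (C(E) + C(G)·t)·Q − 1 and every coefficient of the power series Q·(C(E) + C(G)·t) − 1 belongs to I. -/

import Mathlib

private lemma negpow_left_comm {R : Type*} [Ring R] (m : ℕ) (x y : R) :
    x * ((-1) ^ m * y) = (-1) ^ m * (x * y) := by
  rcases Nat.even_or_odd m with h | h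
  · simp [h.neg_one_pow]
  · simp [h.neg_one_pow]

/-- The formal power series `Q = Σ_n (−1)^n ((P·G)^n·P) t^n`. -/
noncomputable def Qser {R : Type*} [Ring R] (P G : R) : PowerSeries R :=
  PowerSeries.mk fun n => (-1) ^ n * ((P * G) ^ n * P)

/-- Modulo any two-sided ideal containing the smoothing terms `S`, `S'`, the series `Q`
is a two-sided inverse of `C(E) + C(G)·t`. -/
theorem Qser_inverse_mod_ideal {R : Type*} [Ring R] (E P G S S' : R)
    (h1 : E * P = 1 + S) (h2 : P * E = 1 + S')
    (I : TwoSidedIdeal R) (hS : S ∈ I) (hS' : S' ∈ I) :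
    (∀ n : ℕ,
      PowerSeries.coeff (R := R) n
        ((PowerSeries.C (R := R) E + PowerSeries.C (R := R) G * PowerSeries.X) * Qser P G - 1) ∈ I) ∧
    (∀ n : ℕ,
      PowerSeries.coeff (R := R) n
        (Qser P G * (PowerSeries.C (R := R) E + PowerSeries.C (R := R) G * PowerSeries.X) - 1) ∈ I) := by
  constructor
  · intro n
    rw [add_mul, mul_assoc]
    cases n with
    | zero =>
      have : (PowerSeries.coeff (R := R) 0)
          (PowerSeries.C (R := R) E * Qser P G + PowerSeries.C (R := R) G * (PowerSeries.X * Qser P G) - 1)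
          = S := by
        simp [Qser, h1]
      rw [this]; exact hS
    | succ n =>
      have hc : (PowerSeries.coeff (R := R) (n + 1))
          (PowerSeries.C (R := R) E * Qser P G + PowerSeries.C (R := R) G * (PowerSeries.X * Qser P G) - 1)
          = E * ((-1) ^ (n + 1) * ((P * G) ^ (n + 1) * P))
            + G * ((-1) ^ n * ((P * G) ^ n * P)) := by
        rw [map_sub, map_add, PowerSeries.coeff_C_mul, PowerSeries.coeff_C_mul,
          PowerSeries.coeff_succ_X_mul]
        simp [Qser]
      rw [hc, negpow_left_comm, negpow_left_comm]
      have h3 : E * ((P * G) ^ (n + 1) * P)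
          = E * P * (G * ((P * G) ^ n * P)) := by
        rw [pow_succ' (P * G) n]; noncomm_ring
      rw [h3, h1]
      have h4 : (-1 : R) ^ (n + 1) * (1 + S) * (G * ((P * G) ^ n * P))
            + (-1) ^ n * (G * ((P * G) ^ n * P))
          = (-1) ^ (n + 1) * (S * (G * ((P * G) ^ n * P))) := by
        rw [pow_succ (-1 : R) n, mul_neg_one]
        noncomm_ring
      rw [← mul_assoc ((-1 : R) ^ (n + 1)), h4]
      exact I.mul_mem_left _ _ (I.mul_mem_right _ _ hS)
  · intro n
    rw [mul_add, ← mul_assoc]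
    cases n with
    | zero =>
      have : (PowerSeries.coeff (R := R) 0)
          (Qser P G * PowerSeries.C (R := R) E + Qser P G * PowerSeries.C (R := R) G * PowerSeries.X - 1)
          = S' := by
        simp [Qser, h2]
      rw [this]; exact hS'
    | succ n =>
      have hc : (PowerSeries.coeff (R := R) (n + 1))
          (Qser P G * PowerSeries.C (R := R) E + Qser P G * PowerSeries.C (R := R) G * PowerSeries.X - 1)
          = (-1) ^ (n + 1) * ((P * G) ^ (n + 1) * P) * E
            + (-1) ^ n * ((P * G) ^ n * P) * G := by
        rw [map_sub, map_add, PowerSeries.coeff_mul_C,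
          ((Qser P G * PowerSeries.C (R := R) G).commute_X).eq, PowerSeries.coeff_succ_X_mul,
          PowerSeries.coeff_mul_C]
        simp [Qser]
      rw [hc]
      have e1 : (-1 : R) ^ (n + 1) * ((P * G) ^ (n + 1) * P) * E
          = (-1) ^ (n + 1) * ((P * G) ^ n * (P * G) * (P * E)) := by
        rw [pow_succ (P * G) n]; noncomm_ring
      rw [e1, h2]
      have e2 : (-1 : R) ^ (n + 1) * ((P * G) ^ n * (P * G) * (1 + S'))
            + (-1) ^ n * ((P * G) ^ n * P) * G
          = (-1) ^ (n + 1) * ((P * G) ^ n * (P * G) * S') := by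
        rw [pow_succ (-1 : R) n, mul_neg_one]
        noncomm_ring
      rw [e2]
      exact I.mul_mem_left _ _ (I.mul_mem_left _ _ hS')
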